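/- (Generalized Snell's law, dot product form.) Let 1 < p_i, p_j < +∞, let ω_i, ω_j > 0, let F ⊆ ℝ^d be a polytope, and let a, c ∈ ℝ^d with a ∉ F and c ∉ F. Suppose b minimizes y ↦ ω_i‖y − a‖_{p_i} + ω_j‖c − y‖_{p_j} over y ∈ F, and let F_b be the face of F such that b ∈ relint(F_b). Then for every vector v ∈ L(aff(F_b)): ω_i ([(b − a)/‖b − a‖_{p_i}]°)·v = ω_j ([(c − b)/‖c − b‖_{p_j}]°)·v, where the polar vectors are taken with respect to p_i and p_j respectively; equivalently, ω_i ((b − a)°/‖(b − a)°‖_{p_i°})·v = ω_j ((c − b)°/‖(c − b)°‖_{p_j°})·v. -/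

import Mathlib

open scoped BigOperators

/-- The ℓ_p norm on ℝ^d for a real exponent p. -/
noncomputable def lpnorm {d : ℕ} (p : ℝ) (x : Fin d → ℝ) : ℝ :=
  (∑ k, |x k| ^ p) ^ (1 / p)

/-- The polar vector of `v` with respect to the ℓ_p norm. -/
noncomputable def polarVec {d : ℕ} (p : ℝ) (v : Fin d → ℝ) : Fin d → ℝ :=
  if v = 0 then 0
  else fun k => (|v k| / lpnorm p v) ^ (p - 1) * Real.sign (v k) * lpnorm p v

open Real Finset

/-- the "gradient" of the lp norm at x -/
noncomputable def lpgrad {d : ℕ} (p : ℝ) (x : Fin d → ℝ) : Fin d → ℝ :=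
  fun k => (|x k| / lpnorm p x) ^ (p - 1) * Real.sign (x k)

lemma real_sign_mul_abs (r : ℝ) : Real.sign r * |r| = r := by
  rcases lt_trichotomy r 0 with h | h | h
  · rw [Real.sign_of_neg h, abs_of_neg h]; ring
  · simp [h]
  · rw [Real.sign_of_pos h, abs_of_pos h]; ring

lemma sum_abs_rpow_pos {d : ℕ} {p : ℝ} {x : Fin d → ℝ} (hx : x ≠ 0) :
    0 < ∑ k, |x k| ^ p := by
  obtain ⟨k, hk⟩ : ∃ k, x k ≠ 0 := by
    by_contra h; push_neg at h; exact hx (funext h)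
  exact Finset.sum_pos' (fun i _ => Real.rpow_nonneg (abs_nonneg _) _)
    ⟨k, Finset.mem_univ k, Real.rpow_pos_of_pos (abs_pos.2 hk) _⟩

lemma lpnorm_pos {d : ℕ} {p : ℝ} {x : Fin d → ℝ} (hx : x ≠ 0) :
    0 < lpnorm p x :=
  Real.rpow_pos_of_pos (sum_abs_rpow_pos hx) _

lemma lpnorm_rpow {d : ℕ} {p : ℝ} (hp : p ≠ 0) (x : Fin d → ℝ) :
    (lpnorm p x) ^ p = ∑ k, |x k| ^ p := by
  rw [lpnorm, ← Real.rpow_mul (Finset.sum_nonneg fun i _ => Real.rpow_nonneg (abs_nonneg _) _),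
    one_div, inv_mul_cancel₀ hp, Real.rpow_one]

/-- pointwise formula relating the gradient to `s0 ^ (1/p-1) * |x k|^(p-2) * x k`. -/
lemma lpgrad_eq {d : ℕ} {p : ℝ} (hp : 1 < p) {x : Fin d → ℝ} (hx : x ≠ 0) (k : Fin d) :
    lpgrad p x k = (∑ j, |x j| ^ p) ^ (1 / p - 1) * (|x k| ^ (p - 2) * x k) := by
  have hs0 : 0 < ∑ j, |x j| ^ p := sum_abs_rpow_pos hx
  have hN : 0 < lpnorm p x := lpnorm_pos hx
  have hp0 : p ≠ 0 := by positivity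
  have hNp : (lpnorm p x) ^ (p - 1) = (∑ j, |x j| ^ p) ^ ((p - 1) / p) := by
    rw [lpnorm, ← Real.rpow_mul hs0.le]
    ring_nf
  have hs : (∑ j, |x j| ^ p) ^ (1 / p - 1) = ((lpnorm p x) ^ (p - 1))⁻¹ := by
    rw [hNp, ← Real.rpow_neg hs0.le]
    congr 1
    field_simp
    ring
  rcases eq_or_ne (x k) 0 with h | h
  · simp [lpgrad, h, Real.zero_rpow (by linarith : p - 1 ≠ 0), Real.sign_zero]
  · have habs : 0 < |x k| := abs_pos.2 h
    rw [lpgrad, Real.div_rpow (abs_nonneg _) hN.le, hs]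
    have h1 : |x k| ^ (p - 1) = |x k| ^ (p - 2) * |x k| := by
      rw [show (p - 1 : ℝ) = (p - 2) + 1 by ring, Real.rpow_add habs, Real.rpow_one]
    rw [h1]
    have h2 := real_sign_mul_abs (x k)
    calc |x k| ^ (p - 2) * |x k| / lpnorm p x ^ (p - 1) * Real.sign (x k)
        = ((lpnorm p x) ^ (p - 1))⁻¹ * (|x k| ^ (p - 2) * (Real.sign (x k) * |x k|)) := by
          ring
      _ = ((lpnorm p x) ^ (p - 1))⁻¹ * (|x k| ^ (p - 2) * x k) := by rw [h2]
lemma hasDerivAt_lpnorm_dir {d : ℕ} {p : ℝ} (hp : 1 < p) {x : Fin d → ℝ} (hx : x ≠ 0)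
    (v : Fin d → ℝ) :
    HasDerivAt (fun t : ℝ => lpnorm p (x + t • v)) (∑ k, lpgrad p x k * v k) 0 := by
  have hp0 : p ≠ 0 := by positivity
  have hs0 : 0 < ∑ j, |x j| ^ p := sum_abs_rpow_pos hx
  set s : ℝ → ℝ := fun t => ∑ k, |x k + t * v k| ^ p with hsdef
  have hs : HasDerivAt s (∑ k, (p * |x k| ^ (p - 2) * x k) * v k) 0 := by
    apply HasDerivAt.fun_sum
    intro k _
    have h1 : HasDerivAt (fun t : ℝ => x k + t * v k) (v k) 0 := by
      simpa using (hasDerivAt_mul_const (v k)).const_add (x k)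
    have h2 : HasDerivAt (fun u : ℝ => |u| ^ p) (p * |x k| ^ (p - 2) * x k)
        ((fun t : ℝ => x k + t * v k) 0) := by
      simpa using hasDerivAt_abs_rpow (x k) hp
    exact h2.comp 0 h1
  have hs00 : s 0 = ∑ j, |x j| ^ p := by simp [hsdef]
  have houter : HasDerivAt (fun u : ℝ => u ^ (1 / p))
      ((1 / p) * (s 0) ^ (1 / p - 1)) (s 0) := by
    apply Real.hasDerivAt_rpow_const
    left
    rw [hs00]; exact hs0.ne'
  have hcomp := houter.comp 0 hs
  have hfun : (fun t : ℝ => lpnorm p (x + t • v)) = (fun u : ℝ => u ^ (1 / p)) ∘ s := by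
    funext t
    simp [lpnorm, hsdef, Function.comp]
  rw [hfun]
  refine hcomp.congr_deriv (Eq.symm ?_)
  rw [hs00, Finset.mul_sum]
  apply Finset.sum_congr rfl
  intro k _
  rw [lpgrad_eq hp hx]
  field_simp
lemma real_sign_pos_mul {r y : ℝ} (hr : 0 < r) : Real.sign (r * y) = Real.sign y := by
  rcases lt_trichotomy y 0 with h | h | h
  · rw [Real.sign_of_neg h, Real.sign_of_neg (mul_neg_of_pos_of_neg hr h)]
  · simp [h]
  · rw [Real.sign_of_pos h, Real.sign_of_pos (mul_pos hr h)]

lemma polarVec_normalized {d : ℕ} {p : ℝ} (hp : 1 < p) {x : Fin d → ℝ} (hx : x ≠ 0) :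
    polarVec p ((lpnorm p x)⁻¹ • x) = lpgrad p x := by
  have hp0 : p ≠ 0 := by positivity
  have hN : 0 < lpnorm p x := lpnorm_pos hx
  set u : Fin d → ℝ := (lpnorm p x)⁻¹ • x with hu
  have hu0 : u ≠ 0 := smul_ne_zero (inv_ne_zero hN.ne') hx
  have huk : ∀ k, u k = (lpnorm p x)⁻¹ * x k := fun k => rfl
  have habs : ∀ k, |u k| = (lpnorm p x)⁻¹ * |x k| := by
    intro k; rw [huk, abs_mul, abs_of_pos (inv_pos.2 hN)]
  have hnorm : lpnorm p u = 1 := by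
    have hsum : ∑ k, |u k| ^ p = 1 := by
      have : ∀ k, |u k| ^ p = ((lpnorm p x) ^ p)⁻¹ * |x k| ^ p := by
        intro k
        rw [habs, Real.mul_rpow (inv_nonneg.2 hN.le) (abs_nonneg _),
          ← Real.rpow_neg_one (lpnorm p x), ← Real.rpow_mul hN.le, neg_one_mul,
          Real.rpow_neg hN.le]
      rw [Finset.sum_congr rfl fun k _ => this k, ← Finset.mul_sum,
        ← lpnorm_rpow hp0 x, inv_mul_cancel₀ (by positivity)]
    rw [lpnorm, hsum, Real.one_rpow]
  have hsign : ∀ k, Real.sign (u k) = Real.sign (x k) := by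
    intro k; rw [huk, real_sign_pos_mul (inv_pos.2 hN)]
  funext k
  rw [polarVec, if_neg hu0, hnorm, lpgrad, hsign, habs, div_one, mul_one]
  congr 2
  rw [div_eq_inv_mul]

lemma lpnorm_polarVec {d : ℕ} {p : ℝ} (hp : 1 < p) {x : Fin d → ℝ} (hx : x ≠ 0) :
    lpnorm (p / (p - 1)) (polarVec p x) = lpnorm p x := by
  have hp0 : p ≠ 0 := by positivity
  have hp1 : (0:ℝ) < p - 1 := by linarith
  have hq0 : (0:ℝ) < p / (p - 1) := by positivity
  have hN : 0 < lpnorm p x := lpnorm_pos hx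
  set N := lpnorm p x with hNdef
  set q := p / (p - 1) with hq
  have habs : ∀ k, |polarVec p x k| = (|x k| / N) ^ (p - 1) * N := by
    intro k
    rw [polarVec, if_neg hx]
    rcases eq_or_ne (x k) 0 with h | h
    · simp [h, Real.zero_rpow hp1.ne', Real.sign_zero, zero_div]
    · rw [abs_mul, abs_mul, abs_of_pos hN,
        abs_of_nonneg (Real.rpow_nonneg (div_nonneg (abs_nonneg _) hN.le) _)]
      rcases Real.sign_apply_eq_of_ne_zero (x k) h with hs | hs <;> rw [hs] <;> norm_num
  have hsum : ∑ k, |polarVec p x k| ^ q = N ^ q := by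
    have : ∀ k, |polarVec p x k| ^ q = |x k| ^ p / N ^ p * N ^ q := by
      intro k
      rw [habs, Real.mul_rpow (Real.rpow_nonneg (div_nonneg (abs_nonneg _) hN.le) _) hN.le,
        ← Real.rpow_mul (div_nonneg (abs_nonneg _) hN.le)]
      have : (p - 1) * q = p := by rw [hq]; field_simp
      rw [this, Real.div_rpow (abs_nonneg _) hN.le]
    rw [Finset.sum_congr rfl fun k _ => this k, ← Finset.sum_mul, ← Finset.sum_div,
      ← lpnorm_rpow hp0 x, ← hNdef, div_self (by positivity), one_mul]
  rw [lpnorm, hsum, ← Real.rpow_mul hN.le, mul_one_div_cancel hq0.ne', Real.rpow_one]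

lemma polarVec_scaled {d : ℕ} {p : ℝ} (hp : 1 < p) {x : Fin d → ℝ} (hx : x ≠ 0) :
    (lpnorm (p / (p - 1)) (polarVec p x))⁻¹ • polarVec p x = lpgrad p x := by
  have hN : 0 < lpnorm p x := lpnorm_pos hx
  rw [lpnorm_polarVec hp hx]
  funext k
  show (lpnorm p x)⁻¹ * polarVec p x k = _
  rw [polarVec, if_neg hx, lpgrad]
  field_simp
/-- Generalized Snell's law (Snell's-like local optimality criterion for gate points),
dot product form. -/
theorem stmt_7 {d : ℕ} (pi pj : ℝ) (hpi : 1 < pi) (hpj : 1 < pj)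
    (ωi ωj : ℝ) (hωi : 0 < ωi) (hωj : 0 < ωj)
    (S : Finset (Fin d → ℝ)) (F : Set (Fin d → ℝ))
    (hF : F = convexHull ℝ (S : Set (Fin d → ℝ)))
    (a c : Fin d → ℝ) (ha : a ∉ F) (hc : c ∉ F)
    (b : Fin d → ℝ) (hbF : b ∈ F)
    (hmin : ∀ y ∈ F, ωi * lpnorm pi (b - a) + ωj * lpnorm pj (c - b) ≤
      ωi * lpnorm pi (y - a) + ωj * lpnorm pj (c - y))
    (Fb : Set (Fin d → ℝ)) (hFbconv : Convex ℝ Fb) (hFbface : IsExtreme ℝ F Fb)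
    (hbrel : b ∈ intrinsicInterior ℝ Fb) :
    ∀ v : Fin d → ℝ,
      (∃ f ∈ (affineSpan ℝ Fb : Set (Fin d → ℝ)),
        ∃ g ∈ (affineSpan ℝ Fb : Set (Fin d → ℝ)), v = f - g) →
      (ωi * ∑ k, polarVec pi ((lpnorm pi (b - a))⁻¹ • (b - a)) k * v k
          = ωj * ∑ k, polarVec pj ((lpnorm pj (c - b))⁻¹ • (c - b)) k * v k) ∧
      (ωi * ∑ k, ((lpnorm (pi / (pi - 1)) (polarVec pi (b - a)))⁻¹ • polarVec pi (b - a)) k * v k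
          = ωj * ∑ k, ((lpnorm (pj / (pj - 1)) (polarVec pj (c - b)))⁻¹ • polarVec pj (c - b)) k * v k) := by
  intro v hv
  obtain ⟨f, hf, g, hg, hvfg⟩ := hv
  have hba : b - a ≠ 0 := sub_ne_zero.2 (by rintro rfl; exact ha hbF)
  have hcb : c - b ≠ 0 := sub_ne_zero.2 (by rintro h; exact hc (h ▸ hbF))
  have hbFb : b ∈ Fb := intrinsicInterior_subset hbrel
  have hbspan : b ∈ affineSpan ℝ Fb := subset_affineSpan ℝ Fb hbFb
  have hmemline : ∀ t : ℝ, b + t • v ∈ affineSpan ℝ Fb := by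
    intro t
    have := AffineSubspace.smul_vsub_vadd_mem (affineSpan ℝ Fb) t hf hg hbspan
    simpa [hvfg, vsub_eq_sub, vadd_eq_add, add_comm] using this
  obtain ⟨b', hb', hb'val⟩ := mem_intrinsicInterior.mp hbrel
  set ψ : ℝ → affineSpan ℝ Fb := fun t => ⟨b + t • v, hmemline t⟩ with hψ
  have hψcont : Continuous ψ := by
    apply Continuous.subtype_mk
    exact continuous_const.add (continuous_id.smul continuous_const)
  have hψ0 : ψ 0 = b' := by
    apply Subtype.ext
    simp [hψ, hb'val]
  have hopen : IsOpen (ψ ⁻¹' interior ((↑) ⁻¹' Fb : Set (affineSpan ℝ Fb))) :=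
    isOpen_interior.preimage hψcont
  have h0mem : (0:ℝ) ∈ ψ ⁻¹' interior ((↑) ⁻¹' Fb : Set (affineSpan ℝ Fb)) := by
    rw [Set.mem_preimage, hψ0]; exact hb'
  obtain ⟨ε, hε, hball⟩ := Metric.isOpen_iff.1 hopen 0 h0mem
  have hmemF : ∀ t : ℝ, |t| < ε → b + t • v ∈ F := by
    intro t ht
    have h1 : ψ t ∈ interior ((↑) ⁻¹' Fb : Set (affineSpan ℝ Fb)) :=
      hball (by simpa [Real.dist_eq] using ht)
    have h2 := interior_subset h1
    rw [Set.mem_preimage] at h2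
    exact hFbface.1 h2
  set G1 := lpgrad pi (b - a) with hG1
  set G2 := lpgrad pj (c - b) with hG2
  have hd1 : HasDerivAt (fun t : ℝ => lpnorm pi ((b - a) + t • v)) (∑ k, G1 k * v k) 0 :=
    hasDerivAt_lpnorm_dir hpi hba v
  have hd2 : HasDerivAt (fun t : ℝ => lpnorm pj ((c - b) + t • (-v))) (∑ k, G2 k * (-v) k) 0 :=
    hasDerivAt_lpnorm_dir hpj hcb (-v)
  set φ : ℝ → ℝ :=
    fun t => ωi * lpnorm pi ((b - a) + t • v) + ωj * lpnorm pj ((c - b) + t • (-v)) with hφ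
  have hdφ : HasDerivAt φ (ωi * ∑ k, G1 k * v k + ωj * ∑ k, G2 k * (-v) k) 0 :=
    (hd1.const_mul ωi).add (hd2.const_mul ωj)
  have hlocmin : IsLocalMin φ 0 := by
    have hE : ∀ᶠ t in nhds (0:ℝ), φ 0 ≤ φ t := by
      filter_upwards [Metric.ball_mem_nhds (0:ℝ) hε] with t ht
      have ht' : |t| < ε := by simpa [Real.dist_eq] using ht
      have hIneq := hmin _ (hmemF t ht')
      have e1 : (b + t • v) - a = (b - a) + t • v := by module
      have e2 : c - (b + t • v) = (c - b) + t • (-v) := by module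
      rw [e1, e2] at hIneq
      simpa [hφ] using hIneq
    exact hE
  have hzero := hlocmin.hasDerivAt_eq_zero hdφ
  have hneg : ∑ k, G2 k * (-v) k = -∑ k, G2 k * v k := by
    simp [mul_neg]
  have key : ωi * ∑ k, G1 k * v k = ωj * ∑ k, G2 k * v k := by
    rw [hneg] at hzero; linarith
  constructor
  · rw [polarVec_normalized hpi hba, polarVec_normalized hpj hcb, ← hG1, ← hG2]
    exact key
  · rw [polarVec_scaled hpi hba, polarVec_scaled hpj hcb, ← hG1, ← hG2]
    exact key
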